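/- Let F ⊆ S_n be a t-cycle-intersecting family that is maximal and fixed. Then for any i, j ∈ [n] with i < j, the family C_{i,j}(F) is a fixed family of permutations. -/

import Mathlib

open Equiv Finset
open scoped Classical

noncomputable section

/-- A common cycle of two permutations `σ` and `π`: a nonempty subset `B` invariant
under both, on which they agree, and on which `σ` acts as a single cycle. -/
def IsCommonCycle {n : ℕ} (σ π : Equiv.Perm (Fin n)) (B : Finset (Fin n)) : Prop :=
  B.Nonempty ∧ (∀ x ∈ B, σ x ∈ B) ∧ (∀ x ∈ B, π x ∈ B) ∧
  (∀ x ∈ B, σ x = π x) ∧ (∀ x ∈ B, ∀ y ∈ B, σ.SameCycle x y)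

/-- A family of permutations is `t`-cycle-intersecting if any two of its members
have at least `t` common cycles on pairwise disjoint subsets. -/
def TCycleIntersecting {n : ℕ} (t : ℕ) (F : Set (Equiv.Perm (Fin n))) : Prop :=
  ∀ σ ∈ F, ∀ π ∈ F, ∃ 𝒞 : Finset (Finset (Fin n)),
    t ≤ 𝒞.card ∧ (∀ B ∈ 𝒞, IsCommonCycle σ π B) ∧
    (𝒞 : Set (Finset (Fin n))).Pairwise fun A B => Disjoint A B

/-- The `ij`-fixing of a permutation: if `σ i = j` then make `i` a fixed point and
send `σ⁻¹ i` to `j`, leaving everything else unchanged. -/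
def ijFix {n : ℕ} (i j : Fin n) (σ : Equiv.Perm (Fin n)) : Equiv.Perm (Fin n) :=
  if σ i = j then σ * Equiv.swap i (σ⁻¹ i) else σ

/-- The `ij`-fixing operation on a family of permutations. -/
def fixFamOp {n : ℕ} (i j : Fin n) (A : Set (Equiv.Perm (Fin n))) :
    Set (Equiv.Perm (Fin n)) :=
  (fun σ => if ijFix i j σ ∈ A then σ else ijFix i j σ) '' A

/-- A family is fixed if it is closed under all `ij`-fixing operations. -/
def IsFixedFam {n : ℕ} (A : Set (Equiv.Perm (Fin n))) : Prop :=
  ∀ i j : Fin n, i ≠ j → fixFamOp i j A = A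

/-- The `(i,j)`-compression of a permutation: if `σ i ≠ i` and `σ j = j`, then
fix `i`, send `j` to `σ i` and `σ⁻¹ i` to `j`; otherwise leave `σ` unchanged. -/
def compPerm {n : ℕ} (i j : Fin n) (σ : Equiv.Perm (Fin n)) : Equiv.Perm (Fin n) :=
  if σ i ≠ i ∧ σ j = j then (Equiv.swap i (σ i) * Equiv.swap i j) * σ else σ

/-- The `(i,j)`-compression operation on a family of permutations. -/
def compFam {n : ℕ} (i j : Fin n) (A : Set (Equiv.Perm (Fin n))) :
    Set (Equiv.Perm (Fin n)) :=
  (fun σ => if compPerm i j σ ∈ A then σ else compPerm i j σ) '' A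

/-- A family is compressed if it is closed under all `(i,j)`-compressions. -/
def IsCompressedFam {n : ℕ} (A : Set (Equiv.Perm (Fin n))) : Prop :=
  ∀ i j : Fin n, i < j → compFam i j A = A

/-- `F` is the stabilizer of `t` points: there are `t` distinct points such that `F`
consists exactly of the permutations fixing all of them. -/
def IsTPointStabilizer {n : ℕ} (t : ℕ) (F : Set (Equiv.Perm (Fin n))) : Prop :=
  ∃ a : Fin t ↪ Fin n, F = {σ | ∀ k, σ (a k) = a k}

/-- The set of fixed points of a permutation. -/
def fixSet {n : ℕ} (σ : Equiv.Perm (Fin n)) : Finset (Fin n) :=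
  Finset.univ.filter fun x => σ x = x

/-- The up-permutation of a set `B`: all permutations fixing every element of `B`. -/
def UpSet {n : ℕ} (B : Finset (Fin n)) : Set (Equiv.Perm (Fin n)) :=
  {σ | ∀ x ∈ B, σ x = x}

/-- The up-permutation of a collection of sets. -/
def UpFam {n : ℕ} (g : Set (Finset (Fin n))) : Set (Equiv.Perm (Fin n)) :=
  ⋃ B ∈ g, UpSet B

/-- `g` is a generating set for `F`: it contains no set of size `n-1` and
`Up(g) = F`. -/
def IsGenSet {n : ℕ} (g : Set (Finset (Fin n))) (F : Set (Equiv.Perm (Fin n))) : Prop :=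
  (∀ B ∈ g, B.card ≠ n - 1) ∧ UpFam g = F

/-- `s⁺(B)`: the largest element of `B`, in the 1-based numbering of `[n] = {1,…,n}`
(so `s⁺(∅) = 0`). -/
def sPlus {n : ℕ} (B : Finset (Fin n)) : ℕ := B.sup fun x => (x : ℕ) + 1

/-- `s⁺(g) = max {s⁺(B) : B ∈ g}`. -/
def sPlusFam {n : ℕ} (g : Set (Finset (Fin n))) : ℕ := sSup (sPlus '' g)

/-- `s_min(G(F)) = min {s⁺(g) : g a generating set of F}`. -/
def sMin {n : ℕ} (F : Set (Equiv.Perm (Fin n))) : ℕ :=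
  sInf (sPlusFam '' {g | IsGenSet g F})

/-- `L(B)`: all sets obtained from `B` by left-shifting, i.e. sets of the same size
whose `i`-th smallest element is at most the `i`-th smallest element of `B`. -/
def LSet {n : ℕ} (B : Finset (Fin n)) : Set (Finset (Fin n)) :=
  {A | ∃ h : A.card = B.card, ∀ i : Fin B.card,
      A.orderEmbOfFin h i ≤ B.orderEmbOfFin rfl i}

/-- `L(g) = ⋃_{B ∈ g} L(B)`. -/
def LFam {n : ℕ} (g : Set (Finset (Fin n))) : Set (Finset (Fin n)) :=
  ⋃ B ∈ g, LSet B

/-- `L_*(g)`: the minimal (under inclusion) elements of `L(g)`. -/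
def Lstar {n : ℕ} (g : Set (Finset (Fin n))) : Set (Finset (Fin n)) :=
  {A | A ∈ LFam g ∧ ∀ A' ∈ LFam g, A' ⊆ A → A' = A}

/-- The interval `[m] = {1,…,m}` inside `Fin n` (1-based). -/
def Ival (n m : ℕ) : Finset (Fin n) := Finset.univ.filter fun x => (x : ℕ) < m

/-- `D(E) = {σ : fix(σ) ∩ [s⁺(E)] = E}`. -/
def DSet {n : ℕ} (E : Finset (Fin n)) : Set (Equiv.Perm (Fin n)) :=
  {σ | fixSet σ ∩ Ival n (sPlus E) = E}


section AuxStmt6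

variable {n : ℕ}

/-- `τ` fixes every fixed point of `σ`. -/
def FixLe (σ τ : Equiv.Perm (Fin n)) : Prop := ∀ x, σ x = x → τ x = x

/-- `A` is up-closed with respect to fixed-point sets. -/
def MonoFam (A : Set (Equiv.Perm (Fin n))) : Prop :=
  ∀ σ ∈ A, ∀ τ, FixLe σ τ → τ ∈ A

lemma mem_fclosed_of_fixedFam {A : Set (Equiv.Perm (Fin n))} (h : IsFixedFam A)
    {k l : Fin n} (hkl : k ≠ l) {σ : Equiv.Perm (Fin n)} (hσ : σ ∈ A) :
    ijFix k l σ ∈ A := by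
  by_cases hm : ijFix k l σ ∈ A
  · exact hm
  · have h2 : (if ijFix k l σ ∈ A then σ else ijFix k l σ) ∈ fixFamOp k l A :=
      Set.mem_image_of_mem _ hσ
    rw [h k l hkl] at h2
    rwa [if_neg hm] at h2

lemma fixedFam_of_fclosed {A : Set (Equiv.Perm (Fin n))}
    (h : ∀ k l : Fin n, k ≠ l → ∀ σ ∈ A, ijFix k l σ ∈ A) : IsFixedFam A := by
  intro k l hkl
  apply Set.Subset.antisymm
  · rintro _ ⟨π, hπ, rfl⟩
    simp only [if_pos (h k l hkl π hπ)]
    exact hπ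
  · intro σ hσ
    exact ⟨σ, hσ, if_pos (h k l hkl σ hσ)⟩

lemma fixLe_ijFix (k l : Fin n) (σ : Equiv.Perm (Fin n)) : FixLe σ (ijFix k l σ) := by
  intro x hx
  unfold ijFix
  split_ifs with h
  · have hswap : Equiv.swap k (σ⁻¹ k) x = x := by
      rcases eq_or_ne x k with rfl | hxk
      · have hzz : σ⁻¹ x = x := Equiv.Perm.inv_eq_iff_eq.mpr hx.symm
        rw [hzz, Equiv.swap_self, Equiv.refl_apply]
      · rcases eq_or_ne x (σ⁻¹ k) with rfl | hxz
        · exfalso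
          apply hxk
          have h2 : σ (σ⁻¹ k) = k := σ.apply_symm_apply k
          rwa [hx] at h2
        · exact Equiv.swap_apply_of_ne_of_ne hxk hxz
    rw [Equiv.Perm.mul_apply, hswap, hx]
  · exact hx

lemma card_le_of_no_moved_agree {t : ℕ} {F : Set (Equiv.Perm (Fin n))}
    (hF : TCycleIntersecting t F) {σ π : Equiv.Perm (Fin n)}
    (hσ : σ ∈ F) (hπ : π ∈ F)
    (h0 : ∀ x, σ x ≠ x → σ x ≠ π x) : t ≤ (fixSet σ ∩ fixSet π).card := by
  obtain ⟨𝒞, ht, hcyc, -⟩ := hF σ hσ π hπ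
  have hsub : 𝒞 ⊆ (fixSet σ ∩ fixSet π).image fun x => ({x} : Finset (Fin n)) := by
    intro B hB
    obtain ⟨hne, hσB, hπB, hag, hsc⟩ := hcyc B hB
    obtain ⟨x, hx⟩ := hne
    have hσx : σ x = x := by
      by_contra hmx
      exact h0 x hmx (hag x hx)
    have hπx : π x = x := (hag x hx).symm.trans hσx
    have hBx : B = {x} := by
      apply Finset.eq_singleton_iff_unique_mem.mpr
      refine ⟨hx, fun y hy => ?_⟩
      exact ((hsc x hx y hy).eq_of_left hσx).symm
    rw [Finset.mem_image]
    exact ⟨x, by simp [fixSet, hσx, hπx], hBx.symm⟩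
  calc t ≤ 𝒞.card := ht
    _ ≤ ((fixSet σ ∩ fixSet π).image fun x => ({x} : Finset (Fin n))).card :=
        Finset.card_le_card hsub
    _ ≤ (fixSet σ ∩ fixSet π).card := Finset.card_image_le

lemma key_card {t : ℕ} {F : Set (Equiv.Perm (Fin n))}
    (hF : TCycleIntersecting t F)
    (hcl : ∀ k l : Fin n, k ≠ l → ∀ σ ∈ F, ijFix k l σ ∈ F) :
    ∀ σ ∈ F, ∀ π ∈ F, t ≤ (fixSet σ ∩ fixSet π).card := by
  suffices H : ∀ m : ℕ, ∀ σ ∈ F, ∀ π ∈ F,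
      (Finset.univ.filter fun x => σ x ≠ x ∧ σ x = π x).card ≤ m →
      t ≤ (fixSet σ ∩ fixSet π).card by
    intro σ hσ π hπ
    exact H _ σ hσ π hπ le_rfl
  intro m
  induction m with
  | zero =>
    intro σ hσ π hπ hm
    refine card_le_of_no_moved_agree hF hσ hπ fun x hx1 hx2 => ?_
    have hmem : x ∈ Finset.univ.filter fun x => σ x ≠ x ∧ σ x = π x :=
      Finset.mem_filter.mpr ⟨Finset.mem_univ x, hx1, hx2⟩
    rw [Finset.card_eq_zero.mp (Nat.le_zero.mp hm)] at hmem
    exact absurd hmem (Finset.notMem_empty x)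
  | succ m ih =>
    intro σ hσ π hπ hm
    by_cases h0 : ∀ x, σ x ≠ x → σ x ≠ π x
    · exact card_le_of_no_moved_agree hF hσ hπ h0
    push_neg at h0
    obtain ⟨x, hx1, hx2⟩ := h0
    have hxy : x ≠ σ x := fun h => hx1 h.symm
    have hσ'F : ijFix x (σ x) σ ∈ F := hcl x (σ x) hxy σ hσ
    set σ' := ijFix x (σ x) σ with hσ'def
    have hσ'eq : σ' = σ * Equiv.swap x (σ⁻¹ x) := by rw [hσ'def, ijFix, if_pos rfl]
    have hzx : σ⁻¹ x ≠ x := by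
      intro h
      apply hx1
      have h2 : σ (σ⁻¹ x) = x := σ.apply_symm_apply x
      rwa [h] at h2
    have hσ'x : σ' x = x := by
      rw [hσ'eq, Equiv.Perm.mul_apply, Equiv.swap_apply_left, (show σ (σ⁻¹ x) = x from σ.apply_symm_apply x)]
    have hσ'z : σ' (σ⁻¹ x) = σ x := by
      rw [hσ'eq, Equiv.Perm.mul_apply, Equiv.swap_apply_right]
    have hσ'w : ∀ w, w ≠ x → w ≠ σ⁻¹ x → σ' w = σ w := by
      intro w h1 h2
      rw [hσ'eq, Equiv.Perm.mul_apply, Equiv.swap_apply_of_ne_of_ne h1 h2]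
    have hπx : π x ≠ x := by rw [← hx2]; exact hx1
    have hπy : π (σ x) ≠ σ x := by
      intro h
      apply hx1
      exact π.injective (h.trans hx2)
    have hfixeq : fixSet σ' ∩ fixSet π = fixSet σ ∩ fixSet π := by
      ext w
      simp only [fixSet, Finset.mem_inter, Finset.mem_filter, Finset.mem_univ, true_and]
      constructor
      · rintro ⟨h1, h2⟩
        refine ⟨?_, h2⟩
        rcases eq_or_ne w x with rfl | hwx
        · exact absurd h2 hπx
        rcases eq_or_ne w (σ⁻¹ x) with rfl | hwz
        · exfalso
          rw [hσ'z] at h1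
          rw [← h1] at h2
          exact hπy h2
        · rwa [hσ'w w hwx hwz] at h1
      · rintro ⟨h1, h2⟩
        refine ⟨?_, h2⟩
        have hwx : w ≠ x := fun h => hx1 (h ▸ h1)
        have hwz : w ≠ σ⁻¹ x := by
          intro h
          apply hwx
          have h3 : σ (σ⁻¹ x) = x := σ.apply_symm_apply x
          rw [← h, h1] at h3
          exact h3
        rw [hσ'w w hwx hwz]
        exact h1
    have hss : (Finset.univ.filter fun w => σ' w ≠ w ∧ σ' w = π w) ⊂
        (Finset.univ.filter fun w => σ w ≠ w ∧ σ w = π w) := by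
      rw [Finset.ssubset_iff_of_subset]
      · refine ⟨x, Finset.mem_filter.mpr ⟨Finset.mem_univ x, hx1, hx2⟩, ?_⟩
        simp [hσ'x]
      · intro w hw
        simp only [Finset.mem_filter, Finset.mem_univ, true_and] at hw ⊢
        obtain ⟨hw1, hw2⟩ := hw
        rcases eq_or_ne w x with rfl | hwx
        · exact absurd hσ'x hw1
        rcases eq_or_ne w (σ⁻¹ x) with rfl | hwz
        · exfalso
          rw [hσ'z] at hw2
          have : σ⁻¹ x = x := π.injective (hw2.symm.trans hx2)
          exact hzx this
        · rw [hσ'w w hwx hwz] at hw1 hw2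
          exact ⟨hw1, hw2⟩
    have hcard : (Finset.univ.filter fun w => σ' w ≠ w ∧ σ' w = π w).card ≤ m := by
      have := Finset.card_lt_card hss
      omega
    have := ih σ' hσ'F π hπ hcard
    rwa [hfixeq] at this

lemma mono_of_max {t : ℕ} {F : Set (Equiv.Perm (Fin n))}
    (hF : TCycleIntersecting t F)
    (hmax : ∀ σ ∉ F, ¬ TCycleIntersecting t (insert σ F))
    (hcl : ∀ k l : Fin n, k ≠ l → ∀ σ ∈ F, ijFix k l σ ∈ F) :
    MonoFam F := by
  intro σ hσ τ hle
  by_contra hτ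
  refine hmax τ hτ ?_
  intro α hα β hβ
  obtain ⟨α', hα'F, hα'le⟩ : ∃ α' ∈ F, FixLe α' α := by
    rcases hα with rfl | hαF
    · exact ⟨σ, hσ, hle⟩
    · exact ⟨α, hαF, fun x hx => hx⟩
  obtain ⟨β', hβ'F, hβ'le⟩ : ∃ β' ∈ F, FixLe β' β := by
    rcases hβ with rfl | hβF
    · exact ⟨σ, hσ, hle⟩
    · exact ⟨β, hβF, fun x hx => hx⟩
  refine ⟨(fixSet α' ∩ fixSet β').image fun x => ({x} : Finset (Fin n)), ?_, ?_, ?_⟩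
  · rw [Finset.card_image_of_injective _ fun a b h => Finset.singleton_injective h]
    exact key_card hF hcl α' hα'F β' hβ'F
  · intro B hB
    rw [Finset.mem_image] at hB
    obtain ⟨x, hx, rfl⟩ := hB
    rw [Finset.mem_inter] at hx
    have hxα : α x = x := hα'le x (by simpa [fixSet] using hx.1)
    have hxβ : β x = x := hβ'le x (by simpa [fixSet] using hx.2)
    refine ⟨⟨x, Finset.mem_singleton_self x⟩, ?_, ?_, ?_, ?_⟩
    · intro w hw
      rw [Finset.mem_singleton] at hw ⊢
      rw [hw, hxα]
    · intro w hw
      rw [Finset.mem_singleton] at hw ⊢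
      rw [hw, hxβ]
    · intro w hw
      rw [Finset.mem_singleton] at hw
      rw [hw, hxα, hxβ]
    · intro w hw y hy
      rw [Finset.mem_singleton] at hw hy
      rw [hw, hy]
  · intro A hA B hB hAB
    simp only [Finset.mem_coe, Finset.mem_image] at hA hB
    obtain ⟨a, -, rfl⟩ := hA
    obtain ⟨b, -, rfl⟩ := hB
    exact Finset.disjoint_singleton.mpr fun h => hAB (by rw [h])

lemma compPerm_of_not {i j : Fin n} {σ : Equiv.Perm (Fin n)}
    (h : ¬(σ i ≠ i ∧ σ j = j)) : compPerm i j σ = σ := if_neg h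

lemma compPerm_fix_iff {i j : Fin n} (hij : i ≠ j) {σ : Equiv.Perm (Fin n)}
    (hA : σ i ≠ i ∧ σ j = j) (w : Fin n) :
    compPerm i j σ w = w ↔ w = i ∨ (σ w = w ∧ w ≠ j) := by
  obtain ⟨hi, hj⟩ := hA
  have haj : σ i ≠ j := fun h => hij (σ.injective (h.trans hj.symm))
  rw [compPerm, if_pos ⟨hi, hj⟩]
  simp only [Equiv.Perm.mul_apply]
  rcases eq_or_ne w i with rfl | hwi
  · rw [Equiv.swap_apply_of_ne_of_ne hi haj, Equiv.swap_apply_right]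
    simp
  rcases eq_or_ne w j with rfl | hwj
  · rw [hj, Equiv.swap_apply_right, Equiv.swap_apply_left]
    constructor
    · intro h
      exact absurd h haj
    · rintro (h | ⟨-, h2⟩)
      · exact absurd h hij.symm
      · exact absurd rfl h2
  · have hσwj : σ w ≠ j := fun h => hwj (σ.injective (h.trans hj.symm))
    rcases eq_or_ne (σ w) i with hswi | hswi
    · rw [hswi, Equiv.swap_apply_left,
        Equiv.swap_apply_of_ne_of_ne hij.symm (Ne.symm haj)]
      constructor
      · intro h
        exact absurd h.symm hwj
      · rintro (h | ⟨h1, -⟩)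
        · exact absurd h hwi
        · exact absurd h1.symm hwi
    · rw [Equiv.swap_apply_of_ne_of_ne hswi hσwj,
        Equiv.swap_apply_of_ne_of_ne hswi (fun h => hwi (σ.injective h) : σ w ≠ σ i)]
      constructor
      · intro h
        exact Or.inr ⟨h, hwj⟩
      · rintro (h | ⟨h1, -⟩)
        · exact absurd h hwi
        · exact h1

lemma fixLe_compPerm {i j : Fin n} (hij : i ≠ j) {σ τ : Equiv.Perm (Fin n)}
    (h : FixLe σ τ) : FixLe (compPerm i j σ) (compPerm i j τ) := by
  by_cases hσA : σ i ≠ i ∧ σ j = j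
  · by_cases hτA : τ i ≠ i ∧ τ j = j
    · intro w hw
      rw [compPerm_fix_iff hij hσA] at hw
      rw [compPerm_fix_iff hij hτA]
      rcases hw with rfl | ⟨h1, h2⟩
      · exact Or.inl rfl
      · exact Or.inr ⟨h _ h1, h2⟩
    · rw [compPerm_of_not hτA]
      intro w hw
      rw [compPerm_fix_iff hij hσA] at hw
      have hτj : τ j = j := h j hσA.2
      have hτi : τ i = i := by
        rcases not_and_or.mp hτA with h1 | h2
        · exact not_not.mp h1
        · exact absurd hτj h2
      rcases hw with rfl | ⟨h1, -⟩
      · exact hτi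
      · exact h _ h1
  · rw [compPerm_of_not hσA]
    by_cases hτA : τ i ≠ i ∧ τ j = j
    · intro w hw
      rw [compPerm_fix_iff hij hτA]
      have hwj : w ≠ j := by
        rintro rfl
        rcases not_and_or.mp hσA with h1 | h2
        · exact hτA.1 (h i (not_not.mp h1))
        · exact h2 hw
      exact Or.inr ⟨h w hw, hwj⟩
    · rw [compPerm_of_not hτA]
      exact h

lemma uncompress {i j : Fin n} (hij : i ≠ j) {τ : Equiv.Perm (Fin n)}
    (hτi : τ i = i) (hτj : τ j ≠ j) :
    ∃ π' : Equiv.Perm (Fin n), compPerm i j π' = τ ∧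
      ∀ w, π' w = w ↔ (w = j ∨ (τ w = w ∧ w ≠ i)) := by
  set b := τ j with hb
  have hbj : b ≠ j := hτj
  have hbi : b ≠ i := by
    intro h
    exact hij (τ.injective (hτi.trans (h.symm.trans hb)))
  refine ⟨Equiv.swap i j * Equiv.swap i b * τ, ?_, ?_⟩
  · have hπ'i : (Equiv.swap i j * Equiv.swap i b * τ) i = b := by
      rw [Equiv.Perm.mul_apply, Equiv.Perm.mul_apply, hτi, Equiv.swap_apply_left,
        Equiv.swap_apply_of_ne_of_ne hbi hbj]
    have hπ'j : (Equiv.swap i j * Equiv.swap i b * τ) j = j := by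
      rw [Equiv.Perm.mul_apply, Equiv.Perm.mul_apply, ← hb, Equiv.swap_apply_right,
        Equiv.swap_apply_left]
    rw [compPerm, if_pos ⟨by rw [hπ'i]; exact hbi, hπ'j⟩, hπ'i]
    ext w
    simp [Equiv.Perm.mul_apply]
  · intro w
    rcases eq_or_ne w i with rfl | hwi
    · simp only [Equiv.Perm.mul_apply, hτi, Equiv.swap_apply_left,
        Equiv.swap_apply_of_ne_of_ne hbi hbj]
      constructor
      · intro h
        exact absurd h hbi
      · rintro (h | ⟨-, h2⟩)
        · exact absurd h hij
        · exact absurd rfl h2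
    rcases eq_or_ne w j with rfl | hwj
    · simp only [Equiv.Perm.mul_apply, ← hb, Equiv.swap_apply_right, Equiv.swap_apply_left]
      simp
    · have h1 : τ w ≠ i := fun h => hwi (τ.injective (h.trans hτi.symm))
      have h2 : τ w ≠ b := fun h => hwj (τ.injective (h.trans hb))
      simp only [Equiv.Perm.mul_apply]
      rw [Equiv.swap_apply_of_ne_of_ne h1 h2]
      rcases eq_or_ne (τ w) j with h3 | h3
      · rw [h3, Equiv.swap_apply_right]
        constructor
        · intro h
          exact absurd h.symm hwi
        · rintro (h | ⟨hh, -⟩)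
          · exact absurd h hwj
          · exact absurd hh.symm hwj
      · rw [Equiv.swap_apply_of_ne_of_ne h1 h3]
        constructor
        · intro h
          exact Or.inr ⟨h, hwi⟩
        · rintro (h | ⟨hh, -⟩)
          · exact absurd h hwj
          · exact hh

lemma comp_mono {i j : Fin n} (hij : i ≠ j) {F : Set (Equiv.Perm (Fin n))}
    (hM : MonoFam F) : MonoFam (compFam i j F) := by
  intro ρ hρ τ hle
  obtain ⟨π, hπF, hπeq⟩ := hρ
  have hπeq' : (if compPerm i j π ∈ F then π else compPerm i j π) = ρ := hπeq
  clear hπeq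
  by_cases hc : compPerm i j π ∈ F
  · rw [if_pos hc] at hπeq'
    subst hπeq'
    have hτF : τ ∈ F := hM π hπF τ hle
    have hcτ : compPerm i j τ ∈ F := hM _ hc _ (fixLe_compPerm hij hle)
    exact ⟨τ, hτF, show (if compPerm i j τ ∈ F then τ else compPerm i j τ) = τ from if_pos hcτ⟩
  · rw [if_neg hc] at hπeq'
    subst hπeq'
    have hA : π i ≠ i ∧ π j = j := by
      by_contra h
      rw [compPerm_of_not h] at hc
      exact hc hπF
    have hτi : τ i = i := hle i ((compPerm_fix_iff hij hA i).mpr (Or.inl rfl))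
    by_cases hτj : τ j = j
    · have hπτ : FixLe π τ := by
        intro w hw
        rcases eq_or_ne w j with rfl | hwj
        · exact hτj
        · exact hle w ((compPerm_fix_iff hij hA w).mpr (Or.inr ⟨hw, hwj⟩))
      have hτF := hM π hπF τ hπτ
      have hcτ : compPerm i j τ = τ := compPerm_of_not (by rintro ⟨h1, -⟩; exact h1 hτi)
      exact ⟨τ, hτF, show (if compPerm i j τ ∈ F then τ else compPerm i j τ) = τ by rw [hcτ, if_pos hτF]⟩
    · obtain ⟨π', hπ'c, hπ'fix⟩ := uncompress hij hτi hτj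
      have hπ'F : π' ∈ F := by
        refine hM π hπF π' ?_
        intro w hw
        rcases eq_or_ne w j with rfl | hwj
        · exact (hπ'fix _).mpr (Or.inl rfl)
        · have hwi : w ≠ i := by
            rintro rfl
            exact hA.1 hw
          have hτw : τ w = w := hle w ((compPerm_fix_iff hij hA w).mpr (Or.inr ⟨hw, hwj⟩))
          exact (hπ'fix w).mpr (Or.inr ⟨hτw, hwi⟩)
      by_cases hτF : τ ∈ F
      · have hcτ : compPerm i j τ = τ := compPerm_of_not (by rintro ⟨h1, -⟩; exact h1 hτi)
        exact ⟨τ, hτF, show (if compPerm i j τ ∈ F then τ else compPerm i j τ) = τ by rw [hcτ, if_pos hτF]⟩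
      · exact ⟨π', hπ'F, show (if compPerm i j π' ∈ F then π' else compPerm i j π') = τ by rw [hπ'c, if_neg hτF]⟩

end AuxStmt6

/-- The `(i,j)`-compression of a maximal fixed `t`-cycle-intersecting family is a
fixed family. -/
theorem stmt6 {n t : ℕ} (F : Set (Equiv.Perm (Fin n)))
    (hF : TCycleIntersecting t F)
    (hmax : ∀ σ ∉ F, ¬ TCycleIntersecting t (insert σ F))
    (hfix : IsFixedFam F) (i j : Fin n) (hij : i < j) :
    IsFixedFam (compFam i j F) := by
  have hcl : ∀ k l : Fin n, k ≠ l → ∀ σ ∈ F, ijFix k l σ ∈ F :=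
    fun k l hkl σ hσ => mem_fclosed_of_fixedFam hfix hkl hσ
  have hmono : MonoFam F := mono_of_max hF hmax hcl
  have hmonoG : MonoFam (compFam i j F) := comp_mono (ne_of_lt hij) hmono
  refine fixedFam_of_fclosed fun k l hkl σ hσ => ?_
  exact hmonoG σ hσ _ (fixLe_ijFix k l σ)
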